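/- Let E be an edge constraint and Γ a set of configurations such that every member of Γ satisfies the universal quantifier w.r.t. E and every singleton configuration satisfying the universal quantifier w.r.t. E is dominated by some member of Γ. Then every configuration C, all of whose sets are nonempty, that satisfies the universal quantifier w.r.t. E and is not strictly dominated by any configuration (all of whose sets are nonempty) satisfying the universal quantifier w.r.t. E, belongs to the combination-closure of Γ. (All maximal configurations can be built by combining input configurations.) -/
import Mathlib

namespace RoundElim

/-- The configuration (multiset of cardinality `δ`) associated to a function `Fin δ → α`. -/
def ofFn {α : Type*} {δ : ℕ} (f : Fin δ → α) : Multiset α :=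
  (List.ofFn f : List α)

variable {σ : Type*} [DecidableEq σ]

/-- `DominatedBy A B` means: configuration `B` dominates configuration `A`. -/
def DominatedBy (A B : Multiset (Finset σ)) : Prop :=
  Multiset.Rel (· ⊆ ·) A B

/-- `StrictlyDominatedBy A B` means: configuration `B` strictly dominates configuration `A`. -/
def StrictlyDominatedBy (A B : Multiset (Finset σ)) : Prop :=
  DominatedBy A B ∧ ¬ DominatedBy B A

/-- The combination of the representatives `a`, `b` with respect to the permutation `φ`
and the index `u`: union at position `u`, intersection everywhere else. -/
def combineFn {δ : ℕ} (a b : Fin δ → Finset σ) (φ : Equiv.Perm (Fin δ)) (u : Fin δ) :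
    Fin δ → Finset σ :=
  fun i => if i = u then a i ∪ b (φ i) else a i ∩ b (φ i)

/-- `C` is a combination of the configurations `A` and `B`. -/
def IsCombination (δ : ℕ) (C A B : Multiset (Finset σ)) : Prop :=
  ∃ (a b : Fin δ → Finset σ) (φ : Equiv.Perm (Fin δ)) (u : Fin δ),
    ofFn a = A ∧ ofFn b = B ∧ ofFn (combineFn a b φ u) = C

/-- `C` satisfies the universal quantifier w.r.t. the edge constraint `E`. -/
def SatUQ (E : Set (Multiset σ)) (C : Multiset (Finset σ)) : Prop :=
  ∀ M : Multiset σ, Multiset.Rel (· ∈ ·) M C → M ∈ E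

/-- A singleton configuration: all its sets have exactly one element. -/
def IsSingletonConfig (C : Multiset (Finset σ)) : Prop :=
  ∀ s ∈ C, s.card = 1

/-- The combination-closure of a set `Γ` of configurations: the smallest set containing `Γ`
and containing every combination of two of its members. -/
inductive CombClosure (δ : ℕ) (Γ : Set (Multiset (Finset σ))) :
    Multiset (Finset σ) → Prop
  | base {C : Multiset (Finset σ)} : C ∈ Γ → CombClosure δ Γ C
  | comb {A B C : Multiset (Finset σ)} : CombClosure δ Γ A → CombClosure δ Γ B →
      IsCombination δ C A B → CombClosure δ Γ C

section Aux

set_option linter.unusedSectionVars false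

lemma card_ofFn' {α : Type*} {δ : ℕ} (f : Fin δ → α) : Multiset.card (ofFn f) = δ := by
  simp [ofFn]

lemma mem_ofFn' {α : Type*} {δ : ℕ} {f : Fin δ → α} {x : α} :
    x ∈ ofFn f ↔ ∃ i, f i = x := by
  simp [ofFn, List.mem_ofFn, Set.range]

lemma ofFn_zero' {α : Type*} (f : Fin 0 → α) : ofFn f = 0 := rfl

lemma ofFn_succ' {α : Type*} {n : ℕ} (f : Fin (n + 1) → α) :
    ofFn f = f 0 ::ₘ ofFn (fun i => f i.succ) := by
  simp [ofFn, List.ofFn_succ]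

lemma rel_ofFn_of_pointwise {α β : Type*} {r : α → β → Prop} :
    ∀ {δ : ℕ} {f : Fin δ → α} {g : Fin δ → β}, (∀ i, r (f i) (g i)) →
      Multiset.Rel r (ofFn f) (ofFn g) := by
  intro δ
  induction δ with
  | zero => intro f g _; simp [ofFn_zero']
  | succ n ih =>
    intro f g h
    rw [ofFn_succ' f, ofFn_succ' g]
    exact Multiset.Rel.cons (h 0) (ih fun i => h i.succ)

lemma rel_ofFn_right {α β : Type*} {r : α → β → Prop} :
    ∀ {δ : ℕ} {M : Multiset α} {g : Fin δ → β}, Multiset.Rel r M (ofFn g) →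
      ∃ f : Fin δ → α, (∀ i, r (f i) (g i)) ∧ ofFn f = M := by
  intro δ
  induction δ with
  | zero =>
    intro M g h
    rw [ofFn_zero', Multiset.rel_zero_right] at h
    exact ⟨Fin.elim0, fun i => i.elim0, by simp [ofFn_zero', h]⟩
  | succ n ih =>
    intro M g h
    rw [ofFn_succ' g, Multiset.rel_cons_right] at h
    obtain ⟨a, M', ha, hM', rfl⟩ := h
    obtain ⟨f', hf', rfl⟩ := ih hM'
    refine ⟨Fin.cons a f', ?_, ?_⟩
    · intro i
      refine Fin.cases ?_ ?_ i
      · simpa using ha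
      · intro j; simpa using hf' j
    · rw [ofFn_succ']
      simp

lemma rel_ofFn_left {α β : Type*} {r : α → β → Prop} {δ : ℕ} {f : Fin δ → α}
    {N : Multiset β} (h : Multiset.Rel r (ofFn f) N) :
    ∃ g : Fin δ → β, (∀ i, r (f i) (g i)) ∧ ofFn g = N := by
  have h' : Multiset.Rel (flip r) N (ofFn f) := Multiset.rel_flip.mpr h
  obtain ⟨g, hg, hgN⟩ := rel_ofFn_right h'
  exact ⟨g, fun i => hg i, hgN⟩

lemma exists_ofFn_eq {α : Type*} {δ : ℕ} {M : Multiset α} (h : Multiset.card M = δ) :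
    ∃ f : Fin δ → α, ofFn f = M := by
  have hl : M.toList.length = δ := by rw [Multiset.length_toList, h]
  refine ⟨fun i => M.toList.get (Fin.cast hl.symm i), ?_⟩
  have : List.ofFn (fun i : Fin δ => M.toList.get (Fin.cast hl.symm i)) = M.toList := by
    apply List.ext_get
    · simp [hl]
    · intro i h1 h2
      simp
  rw [ofFn, this, Multiset.coe_toList]

lemma ofFn_comp_perm {α : Type*} {δ : ℕ} (f : Fin δ → α) (φ : Equiv.Perm (Fin δ)) :
    ofFn (f ∘ φ) = ofFn f := by
  have key : Multiset.map (⇑φ) (↑(List.finRange δ) : Multiset (Fin δ))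
      = (↑(List.finRange δ) : Multiset (Fin δ)) := by
    refine (Multiset.Nodup.ext ?_ ?_).mpr ?_
    · exact Multiset.Nodup.map φ.injective (by simpa using List.nodup_finRange δ)
    · simpa using List.nodup_finRange δ
    · intro a
      simp only [Multiset.mem_map]
      constructor
      · intro _; simp [List.mem_finRange]
      · intro _; exact ⟨φ.symm a, by simp [List.mem_finRange]⟩
  calc ofFn (f ∘ φ) = Multiset.map (f ∘ φ) ↑(List.finRange δ) := by
        rw [ofFn, List.ofFn_eq_map, ← Multiset.map_coe]
    _ = Multiset.map f (Multiset.map (⇑φ) ↑(List.finRange δ)) := by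
        rw [Multiset.map_map]
    _ = Multiset.map f ↑(List.finRange δ) := by rw [key]
    _ = ofFn f := by rw [ofFn, List.ofFn_eq_map, ← Multiset.map_coe]

/-- The total weight of a configuration. -/
def wt (M : Multiset (Finset σ)) : ℕ := (M.map Finset.card).sum

lemma wt_le_and_eq {A B : Multiset (Finset σ)} (h : DominatedBy A B) :
    wt A ≤ wt B ∧ (wt B ≤ wt A → A = B) := by
  induction h with
  | zero => simp [wt]
  | @cons a b as bs hab _ ih =>
    constructor
    · simp only [wt, Multiset.map_cons, Multiset.sum_cons]
      exact Nat.add_le_add (Finset.card_le_card hab) ih.1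
    · intro hle
      simp only [wt, Multiset.map_cons, Multiset.sum_cons] at hle
      have h1 : a.card ≤ b.card := Finset.card_le_card hab
      have h2 : wt as ≤ wt bs := ih.1
      have hb : b.card ≤ a.card := by
        simp only [wt] at h2 ⊢; omega
      have hw : wt bs ≤ wt as := by
        simp only [wt] at h1 ⊢; omega
      rw [Finset.eq_of_subset_of_card_le hab hb, ih.2 hw]

lemma dom_antisymm {A B : Multiset (Finset σ)} (h1 : DominatedBy A B)
    (h2 : DominatedBy B A) : A = B :=
  (wt_le_and_eq h1).2 (wt_le_and_eq h2).1

lemma rel_comp {α β γ : Type*} {r : α → β → Prop} {s : β → γ → Prop}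
    {M : Multiset α} {A : Multiset β} {B : Multiset γ}
    (h1 : Multiset.Rel r M A) (h2 : Multiset.Rel s A B) :
    Multiset.Rel (fun x z => ∃ y, r x y ∧ s y z) M B := by
  induction h1 generalizing B with
  | zero =>
    rw [Multiset.rel_zero_left] at h2
    subst h2; exact Multiset.Rel.zero
  | @cons a b as bs hab _ ih =>
    rw [Multiset.rel_cons_left] at h2
    obtain ⟨c, B', hbc, hB', rfl⟩ := h2
    exact Multiset.Rel.cons ⟨b, hab, hbc⟩ (ih hB')

lemma satUQ_of_dom {E : Set (Multiset σ)} {A B : Multiset (Finset σ)}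
    (hB : SatUQ E B) (h : DominatedBy A B) : SatUQ E A := by
  intro M hM
  refine hB M ((rel_comp hM h).mono ?_)
  rintro x _ t _ ⟨y, hxy, hyt⟩
  exact hyt hxy

lemma dom_mem {A B : Multiset (Finset σ)} (h : DominatedBy A B) :
    ∀ b ∈ B, ∃ a ∈ A, a ⊆ b := by
  induction h with
  | zero => simp
  | @cons a b as bs hab _ ih =>
    intro t ht
    rcases Multiset.mem_cons.mp ht with rfl | ht
    · exact ⟨a, Multiset.mem_cons_self _ _, hab⟩
    · obtain ⟨a', ha', hsub⟩ := ih t ht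
      exact ⟨a', Multiset.mem_cons_of_mem ha', hsub⟩

lemma satUQ_comb {δ : ℕ} {E : Set (Multiset σ)} {a b : Fin δ → Finset σ}
    (ha : SatUQ E (ofFn a)) (hb : SatUQ E (ofFn b)) (φ : Equiv.Perm (Fin δ)) (u : Fin δ) :
    SatUQ E (ofFn (combineFn a b φ u)) := by
  intro M hM
  obtain ⟨m, hm, rfl⟩ := rel_ofFn_right hM
  by_cases hc : m u ∈ a u
  · apply ha
    apply rel_ofFn_of_pointwise
    intro i
    by_cases hi : i = u
    · subst hi; exact hc
    · have := hm i
      simp only [combineFn, if_neg hi, Finset.mem_inter] at this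
      exact this.1
  · have hu : m u ∈ b (φ u) := by
      have h0 := hm u
      rw [show combineFn a b φ u u = a u ∪ b (φ u) from if_pos rfl] at h0
      rcases Finset.mem_union.mp h0 with h1 | h1
      · exact absurd h1 hc
      · exact h1
    have hall : ∀ j, m j ∈ b (φ j) := by
      intro j
      by_cases hj : j = u
      · subst hj; exact hu
      · have := hm j
        simp only [combineFn, if_neg hj, Finset.mem_inter] at this
        exact this.2
    have hofn : ofFn m = ofFn (m ∘ ⇑φ.symm) := by
      have hmeq : m = (m ∘ ⇑φ.symm) ∘ ⇑φ := by funext i; simp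
      conv_lhs => rw [hmeq]
      rw [ofFn_comp_perm]
    rw [hofn]
    apply hb
    apply rel_ofFn_of_pointwise
    intro i
    simpa using hall (φ.symm i)

lemma wt_ofFn {δ : ℕ} (f : Fin δ → Finset σ) : wt (ofFn f) = ∑ i, (f i).card := by
  rw [wt, ofFn, Multiset.map_coe, List.map_ofFn, Multiset.sum_coe]
  exact Fin.sum_ofFn _

/-- Key lemma: every good configuration is dominated by a good member of the
combination-closure. -/
lemma exists_closure_dom {σ : Type*} [Fintype σ] [DecidableEq σ] {δ : ℕ}
    {E : Set (Multiset σ)} {Γ : Set (Multiset (Finset σ))}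
    (hΓuq : ∀ A ∈ Γ, SatUQ E A)
    (hΓsing : ∀ M : Multiset (Finset σ), Multiset.card M = δ → IsSingletonConfig M →
      SatUQ E M → ∃ A ∈ Γ, DominatedBy M A) :
    ∀ (n : ℕ) (A : Multiset (Finset σ)), wt A ≤ n → Multiset.card A = δ →
      (∀ s ∈ A, s.Nonempty) → SatUQ E A →
      ∃ A', CombClosure δ Γ A' ∧ DominatedBy A A' ∧ SatUQ E A' := by
  intro n
  induction n with
  | zero =>
    intro A hw hcard hne huq
    have hAsing : IsSingletonConfig A := by
      intro s hs
      exfalso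
      have h1 : 1 ≤ s.card := Finset.card_pos.mpr (hne s hs)
      have h2 : s.card ≤ wt A :=
        Multiset.single_le_sum (fun x _ => Nat.zero_le x) _ (Multiset.mem_map_of_mem _ hs)
      omega
    obtain ⟨A', hA', hdom⟩ := hΓsing A hcard hAsing huq
    exact ⟨A', CombClosure.base hA', hdom, hΓuq _ hA'⟩
  | succ n ih =>
    intro A hw hcard hne huq
    by_cases hsing : IsSingletonConfig A
    · obtain ⟨A', hA', hdom⟩ := hΓsing A hcard hsing huq
      exact ⟨A', CombClosure.base hA', hdom, hΓuq _ hA'⟩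
    · simp only [IsSingletonConfig, not_forall] at hsing
      obtain ⟨s, hs, hcard1⟩ := hsing
      obtain ⟨x, hx⟩ := hne s hs
      have hs2 : 2 ≤ s.card := by
        have h1 : 1 ≤ s.card := Finset.card_pos.mpr ⟨x, hx⟩
        omega
      obtain ⟨c, hc⟩ := exists_ofFn_eq hcard
      obtain ⟨u, hu⟩ : ∃ u, c u = s := mem_ofFn'.mp (hc ▸ hs)
      set c1 := Function.update c u {x} with hc1def
      set c2 := Function.update c u (s.erase x) with hc2def
      have hc1u : c1 u = {x} := Function.update_self u _ c
      have hc2u : c2 u = s.erase x := Function.update_self u _ c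
      have hc1i : ∀ i, i ≠ u → c1 i = c i := fun i hi => Function.update_of_ne hi _ c
      have hc2i : ∀ i, i ≠ u → c2 i = c i := fun i hi => Function.update_of_ne hi _ c
      have hpt1 : ∀ i, c1 i ⊆ c i := by
        intro i
        by_cases hi : i = u
        · subst hi; rw [hc1u, hu]; simpa using hx
        · rw [hc1i i hi]
      have hpt2 : ∀ i, c2 i ⊆ c i := by
        intro i
        by_cases hi : i = u
        · subst hi; rw [hc2u, hu]; exact Finset.erase_subset _ _
        · rw [hc2i i hi]
      -- weights
      have hsum : ∀ g : Fin δ → Finset σ,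
          ∑ i, (g i).card = (g u).card + ∑ i ∈ Finset.univ.erase u, (g i).card :=
        fun g => (Finset.add_sum_erase _ _ (Finset.mem_univ u)).symm
      have hR1 : ∑ i ∈ Finset.univ.erase u, (c1 i).card
          = ∑ i ∈ Finset.univ.erase u, (c i).card :=
        Finset.sum_congr rfl fun i hi => by rw [hc1i i (Finset.ne_of_mem_erase hi)]
      have hR2 : ∑ i ∈ Finset.univ.erase u, (c2 i).card
          = ∑ i ∈ Finset.univ.erase u, (c i).card :=
        Finset.sum_congr rfl fun i hi => by rw [hc2i i (Finset.ne_of_mem_erase hi)]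
      have hwA : wt A = s.card + ∑ i ∈ Finset.univ.erase u, (c i).card := by
        rw [← hc, wt_ofFn, hsum c, hu]
      have hw1 : wt (ofFn c1) ≤ n := by
        rw [wt_ofFn, hsum c1, hR1, hc1u]
        simp only [Finset.card_singleton]
        omega
      have hw2 : wt (ofFn c2) ≤ n := by
        rw [wt_ofFn, hsum c2, hR2, hc2u, Finset.card_erase_of_mem hx]
        omega
      -- goodness of the two halves
      have hmemA : ∀ i, c i ∈ A := fun i => hc ▸ mem_ofFn'.mpr ⟨i, rfl⟩
      have hne1 : ∀ t ∈ ofFn c1, t.Nonempty := by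
        intro t ht
        obtain ⟨i, rfl⟩ := mem_ofFn'.mp ht
        by_cases hi : i = u
        · subst hi; rw [hc1u]; exact ⟨x, Finset.mem_singleton_self x⟩
        · rw [hc1i i hi]; exact hne _ (hmemA i)
      have hne2 : ∀ t ∈ ofFn c2, t.Nonempty := by
        intro t ht
        obtain ⟨i, rfl⟩ := mem_ofFn'.mp ht
        by_cases hi : i = u
        · subst hi
          rw [hc2u]
          rw [← Finset.card_pos, Finset.card_erase_of_mem hx]
          omega
        · rw [hc2i i hi]; exact hne _ (hmemA i)
      have hdomA1 : DominatedBy (ofFn c1) A := hc ▸ rel_ofFn_of_pointwise hpt1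
      have hdomA2 : DominatedBy (ofFn c2) A := hc ▸ rel_ofFn_of_pointwise hpt2
      have huq1 : SatUQ E (ofFn c1) := satUQ_of_dom huq hdomA1
      have huq2 : SatUQ E (ofFn c2) := satUQ_of_dom huq hdomA2
      obtain ⟨A1', hcl1, hdom1, huqA1'⟩ := ih (ofFn c1) hw1 (card_ofFn' _) hne1 huq1
      obtain ⟨A2', hcl2, hdom2, huqA2'⟩ := ih (ofFn c2) hw2 (card_ofFn' _) hne2 huq2
      obtain ⟨a, hpa, haA⟩ := rel_ofFn_left hdom1
      obtain ⟨b, hpb, hbB⟩ := rel_ofFn_left hdom2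
      refine ⟨ofFn (combineFn a b 1 u),
        CombClosure.comb hcl1 hcl2 ⟨a, b, 1, u, haA, hbB, rfl⟩, ?_, ?_⟩
      · rw [← hc]
        apply rel_ofFn_of_pointwise
        intro i
        by_cases hi : i = u
        · simp only [combineFn, if_pos hi, Equiv.Perm.one_apply]
          rw [hi]
          calc c u = s := hu
            _ = insert x (s.erase x) := (Finset.insert_erase hx).symm
            _ = {x} ∪ s.erase x := by rw [Finset.insert_eq]
            _ ⊆ a u ∪ b u := by
                apply Finset.union_subset_union
                · rw [← hc1u]; exact hpa u
                · rw [← hc2u]; exact hpb u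
        · simp only [combineFn, if_neg hi, Equiv.Perm.one_apply]
          apply Finset.subset_inter
          · rw [← hc1i i hi]; exact hpa i
          · rw [← hc2i i hi]; exact hpb i
      · apply satUQ_comb
        · rw [haA]; exact huqA1'
        · rw [hbB]; exact huqA2'

end Aux

/-- All maximal configurations can be built by combining input configurations: if every member
of `Γ` satisfies the universal quantifier w.r.t. `E` and every singleton configuration
satisfying the universal quantifier is dominated by some member of `Γ`, then every
configuration with nonempty sets that satisfies the universal quantifier and is not strictly
dominated by any such configuration belongs to the combination-closure of `Γ`. -/
theorem maximal_in_closure {σ : Type*} [Fintype σ] [DecidableEq σ] (δ : ℕ) (hδ : 0 < δ)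
    (E : Set (Multiset σ)) (Γ : Set (Multiset (Finset σ)))
    (hΓuq : ∀ A ∈ Γ, SatUQ E A)
    (hΓsing : ∀ M : Multiset (Finset σ), Multiset.card M = δ → IsSingletonConfig M →
      SatUQ E M → ∃ A ∈ Γ, DominatedBy M A)
    (C : Multiset (Finset σ)) (hCcard : Multiset.card C = δ)
    (hCne : ∀ s ∈ C, s.Nonempty) (hCuq : SatUQ E C)
    (hCmax : ¬ ∃ C' : Multiset (Finset σ), Multiset.card C' = δ ∧ (∀ s ∈ C', s.Nonempty) ∧
      SatUQ E C' ∧ StrictlyDominatedBy C C') :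
    CombClosure δ Γ C := by
  obtain ⟨C', hcl, hdom, huq'⟩ :=
    exists_closure_dom hΓuq hΓsing (wt C) C le_rfl hCcard hCne hCuq
  have hcard' : Multiset.card C' = δ := by
    rw [← Multiset.card_eq_card_of_rel hdom, hCcard]
  have hne' : ∀ s ∈ C', s.Nonempty := by
    intro s hs
    obtain ⟨t, ht, hts⟩ := dom_mem hdom s hs
    exact (hCne t ht).mono hts
  by_cases hback : DominatedBy C' C
  · rwa [dom_antisymm hdom hback]
  · exact absurd ⟨C', hcard', hne', huq', hdom, hback⟩ hCmax

end RoundElim
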